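/- Let v_1, …, v_m ∈ ℝⁿ and real numbers λ_1, …, λ_m satisfy λ_1 ≠ 1, λ_2 ≠ λ_1, λ_2 ≠ 0, v_2 ≠ 0, and |λ_2| > |λ_i| for all i ≥ 3. Let c_1, …, c_m ∈ ℝ with c_2 ≠ 0, set E_k = Σ_{i=1}^m c_i·λ_i^k·v_i, and define E_k^{(2)} = E_k + (E_{k+1} − E_k)/(1 − λ_1). Then the sequence of Euclidean norm ratios ‖E_{k+1}^{(2)}‖/‖E_k^{(2)}‖ converges to |λ_2| as k → ∞. -/

import Mathlib

open Filter Topology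

/-- Let `E k = ∑ i, (c i * lam i ^ k) • v i` with `lam 0 ≠ 1`, `lam 1 ≠ lam 0`,
`lam 1 ≠ 0`, `v 1 ≠ 0`, `c 1 ≠ 0`, and `|lam i| < |lam 1|` for all `i > 1`
(second dominance).  Then the second-order Aitken errors
`E2 k = E k + (1 - lam 0)⁻¹ • (E (k+1) - E k)` have Euclidean norm ratios
`‖E2 (k+1)‖ / ‖E2 k‖` converging to `|lam 1|`. -/
theorem second_order_aitken_norm_ratio_tendsto_second_eigenvalue
    {n m : ℕ} (v : Fin (m + 2) → EuclideanSpace ℝ (Fin n)) (c lam : Fin (m + 2) → ℝ)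
    (hlam0 : lam 0 ≠ 1) (hlam10 : lam 1 ≠ lam 0) (hlam1 : lam 1 ≠ 0)
    (hv1 : v 1 ≠ 0) (hc1 : c 1 ≠ 0)
    (hdom : ∀ i, 1 < i → |lam i| < |lam 1|)
    (E : ℕ → EuclideanSpace ℝ (Fin n))
    (hE : ∀ k, E k = ∑ i, (c i * lam i ^ k) • v i)
    (E2 : ℕ → EuclideanSpace ℝ (Fin n))
    (hE2 : ∀ k, E2 k = E k + (1 - lam 0)⁻¹ • (E (k + 1) - E k)) :
    Tendsto (fun k => ‖E2 (k + 1)‖ / ‖E2 k‖) atTop (𝓝 |lam 1|) := by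
  have h1ne : (1 : ℝ) - lam 0 ≠ 0 := sub_ne_zero.mpr (Ne.symm hlam0)
  set d : Fin (m + 2) → ℝ := fun i => c i * (lam i - lam 0) / (1 - lam 0) with hd
  have hE2' : ∀ k, E2 k = ∑ i, (d i * lam i ^ k) • v i := by
    intro k
    rw [hE2, hE, hE, ← Finset.sum_sub_distrib, Finset.smul_sum, ← Finset.sum_add_distrib]
    refine Finset.sum_congr rfl fun i _ => ?_
    rw [← sub_smul, smul_smul, ← add_smul]
    congr 1
    simp only [hd]
    field_simp
    ring
  have hd1 : d 1 ≠ 0 := by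
    simp only [hd]
    exact div_ne_zero (mul_ne_zero hc1 (sub_ne_zero.mpr hlam10)) h1ne
  set F : ℕ → EuclideanSpace ℝ (Fin n) :=
    fun k => ∑ i, (d i * (lam i / lam 1) ^ k) • v i with hF
  have hpow : ∀ k : ℕ, lam 1 ^ k ≠ 0 := fun k => pow_ne_zero k hlam1
  have hE2F : ∀ k, E2 k = (lam 1 ^ k) • F k := by
    intro k
    rw [hE2' k, hF, Finset.smul_sum]
    refine Finset.sum_congr rfl fun i _ => ?_
    rw [smul_smul]
    congr 1
    rw [div_pow]
    field_simp
  have hFlim : Tendsto F atTop (𝓝 (d 1 • v 1)) := by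
    have h1 : Tendsto F atTop
        (𝓝 (∑ i : Fin (m + 2), if i = 1 then d 1 • v 1 else 0)) := by
      apply tendsto_finset_sum
      intro i _
      by_cases hi : i = 1
      · subst hi
        simp only [if_pos rfl, div_self hlam1, one_pow, mul_one]
        exact tendsto_const_nhds
      · rw [if_neg hi]
        by_cases hi0 : i = 0
        · subst hi0
          have hd0 : d 0 = 0 := by simp [hd]
          simp [hd0]
        · have h1i : (1 : Fin (m + 2)) < i := by
            have h0 : i.val ≠ 0 := fun h => hi0 (Fin.ext h)
            have h1 : i.val ≠ 1 := fun h => hi (Fin.ext (by simpa using h))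
            rw [Fin.lt_def]
            simp only [Fin.val_one]
            omega
          have hr : |lam i / lam 1| < 1 := by
            rw [abs_div, div_lt_one (abs_pos.mpr hlam1)]
            exact hdom i h1i
          have h2 : Tendsto (fun k : ℕ => (lam i / lam 1) ^ k) atTop (𝓝 0) :=
            tendsto_pow_atTop_nhds_zero_of_abs_lt_one hr
          have h3 := (h2.const_mul (d i)).smul_const (v i)
          simpa using h3
    simpa using h1
  have hN : Tendsto (fun k => ‖F k‖) atTop (𝓝 ‖d 1 • v 1‖) := hFlim.norm
  have hNne : ‖d 1 • v 1‖ ≠ 0 := norm_ne_zero_iff.mpr (smul_ne_zero hd1 hv1)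
  have key : ∀ k, ‖E2 (k + 1)‖ / ‖E2 k‖ = |lam 1| * ‖F (k + 1)‖ / ‖F k‖ := by
    intro k
    rw [hE2F, hE2F, norm_smul, norm_smul, Real.norm_eq_abs, Real.norm_eq_abs,
      abs_pow, abs_pow, pow_succ, mul_comm (|lam 1| ^ k) (|lam 1|), mul_assoc,
      mul_comm (|lam 1|) (|lam 1| ^ k * ‖F (k + 1)‖), mul_assoc, mul_comm ‖F (k+1)‖ (|lam 1|)]
    rw [mul_div_mul_left _ _ (pow_ne_zero k (abs_ne_zero.mpr hlam1)), mul_div_assoc]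
  have hrat : Tendsto (fun k => |lam 1| * ‖F (k + 1)‖ / ‖F k‖) atTop
      (𝓝 (|lam 1| * ‖d 1 • v 1‖ / ‖d 1 • v 1‖)) := by
    simp only [mul_div_assoc]
    exact ((hN.comp (tendsto_add_atTop_nat 1)).div hN hNne).const_mul _
  rw [mul_div_assoc, div_self hNne, mul_one] at hrat
  simpa only [key] using hrat
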